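/- For 2 ≤ m ≤ n, the mutual-visibility chromatic number of the strong grid P_m ⊠ P_n equals ⌈m/2⌉ if m ≥ 3, and equals 2 if m = 2 (and n ≥ 3). -/

import Mathlib

open SimpleGraph

/-- The strong product of two simple graphs. -/
def strongProd {α β : Type*} (G : SimpleGraph α) (H : SimpleGraph β) :
    SimpleGraph (α × β) where
  Adj x y := x ≠ y ∧ (x.1 = y.1 ∨ G.Adj x.1 y.1) ∧ (x.2 = y.2 ∨ H.Adj x.2 y.2)
  symm := by
    refine ⟨?_⟩
    rintro ⟨a, b⟩ ⟨c, d⟩ ⟨hne, h1, h2⟩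
    refine ⟨hne.symm, ?_, ?_⟩
    · rcases h1 with h | h
      · exact Or.inl h.symm
      · exact Or.inr h.symm
    · rcases h2 with h | h
      · exact Or.inl h.symm
      · exact Or.inr h.symm
  loopless := by refine ⟨?_⟩; rintro ⟨a, b⟩ ⟨hne, -, -⟩; exact hne rfl

/-- `S` is a mutual-visibility set: any two of its vertices are joined by some shortest
path avoiding the rest of `S`. -/
def IsMutualVisSet {V : Type*} (G : SimpleGraph V) (S : Set V) : Prop :=
  ∀ u ∈ S, ∀ v ∈ S, u ≠ v → ∃ p : G.Walk u v, p.IsPath ∧ p.length = G.dist u v ∧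
    ∀ x ∈ p.support, x ∈ S → x = u ∨ x = v

/-- The mutual-visibility chromatic number. -/
noncomputable def muChromatic {V : Type*} (G : SimpleGraph V) : ℕ :=
  sInf {k | ∃ c : V → Fin k, ∀ i, IsMutualVisSet G {v | c v = i}}

namespace MuAux
variable {m n : ℕ}

lemma adj_iff {x y : Fin m × Fin n} :
    (strongProd (pathGraph m) (pathGraph n)).Adj x y ↔
      x ≠ y ∧ (x.1.val ≤ y.1.val + 1 ∧ y.1.val ≤ x.1.val + 1)
        ∧ (x.2.val ≤ y.2.val + 1 ∧ y.2.val ≤ x.2.val + 1) := by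
  constructor
  · rintro ⟨hne, h1, h2⟩
    refine ⟨hne, ?_, ?_⟩
    · rcases h1 with h | h
      · rw [h]; omega
      · rw [pathGraph_adj] at h; omega
    · rcases h2 with h | h
      · rw [h]; omega
      · rw [pathGraph_adj] at h; omega
  · rintro ⟨hne, ⟨h1a, h1b⟩, ⟨h2a, h2b⟩⟩
    refine ⟨hne, ?_, ?_⟩
    · rcases Nat.lt_trichotomy x.1.val y.1.val with h | h | h
      · exact Or.inr (pathGraph_adj.2 (Or.inl (by omega)))
      · exact Or.inl (Fin.ext h)
      · exact Or.inr (pathGraph_adj.2 (Or.inr (by omega)))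
    · rcases Nat.lt_trichotomy x.2.val y.2.val with h | h | h
      · exact Or.inr (pathGraph_adj.2 (Or.inl (by omega)))
      · exact Or.inl (Fin.ext h)
      · exact Or.inr (pathGraph_adj.2 (Or.inr (by omega)))

lemma ne_iff {x y : Fin m × Fin n} : x ≠ y ↔ (x.1.val ≠ y.1.val ∨ x.2.val ≠ y.2.val) := by
  rw [Ne, Prod.ext_iff, Fin.ext_iff, Fin.ext_iff]; tauto

lemma pair_ext {x y : Fin m × Fin n} (h1 : x.1.val = y.1.val) (h2 : x.2.val = y.2.val) :
    x = y := by
  rcases x with ⟨x1, x2⟩; rcases y with ⟨y1, y2⟩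
  simp only [Prod.mk.injEq]
  exact ⟨Fin.ext h1, Fin.ext h2⟩

/-- Lipschitz property of walks in the strong grid. -/
lemma lip {u v : Fin m × Fin n} (p : (strongProd (pathGraph m) (pathGraph n)).Walk u v) :
    u.1.val ≤ v.1.val + p.length ∧ v.1.val ≤ u.1.val + p.length ∧
      u.2.val ≤ v.2.val + p.length ∧ v.2.val ≤ u.2.val + p.length := by
  induction p with
  | nil => simp
  | cons h q ih =>
    rw [Walk.length_cons]
    obtain ⟨-, h1, h2⟩ := adj_iff.1 h
    omega

def mkWalk {V : Type*} (G : SimpleGraph V) (f : ℕ → V) :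
    (L : ℕ) → (∀ i, i < L → G.Adj (f i) (f (i + 1))) → G.Walk (f 0) (f L)
  | 0, _ => Walk.nil
  | (L + 1), h =>
      Walk.concat (mkWalk G f L fun i hi => h i (Nat.lt_succ_of_lt hi)) (h L (Nat.lt_succ_self L))

lemma mkWalk_length {V : Type*} (G : SimpleGraph V) (f : ℕ → V) :
    ∀ (L : ℕ) (h : ∀ i, i < L → G.Adj (f i) (f (i + 1))), (mkWalk G f L h).length = L
  | 0, _ => rfl
  | (L + 1), h => by
      rw [mkWalk, Walk.length_concat, mkWalk_length]

lemma mkWalk_support {V : Type*} (G : SimpleGraph V) (f : ℕ → V) :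
    ∀ (L : ℕ) (h : ∀ i, i < L → G.Adj (f i) (f (i + 1))),
      (mkWalk G f L h).support = (List.range (L + 1)).map f
  | 0, _ => by simp [mkWalk, List.range_succ]
  | (L + 1), h => by
      rw [mkWalk, Walk.support_concat, mkWalk_support, List.range_succ, List.range_succ,
        List.range_succ]
      simp

lemma mkWalk_isPath {V : Type*} (G : SimpleGraph V) (f : ℕ → V) (L : ℕ)
    (h : ∀ i, i < L → G.Adj (f i) (f (i + 1)))
    (hinj : ∀ i j, i ≤ L → j ≤ L → f i = f j → i = j) : (mkWalk G f L h).IsPath := by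
  rw [Walk.isPath_def, mkWalk_support]
  refine List.Nodup.map_on ?_ List.nodup_range
  intro x hx y hy hxy
  rw [List.mem_range] at hx hy
  exact hinj x y (by omega) (by omega) hxy

lemma mem_mkWalk_support {V : Type*} {G : SimpleGraph V} {f : ℕ → V} {L : ℕ}
    {h : ∀ i, i < L → G.Adj (f i) (f (i + 1))} {x : V} :
    x ∈ (mkWalk G f L h).support ↔ ∃ s, s ≤ L ∧ f s = x := by
  rw [mkWalk_support]
  simp only [List.mem_map, List.mem_range]
  constructor
  · rintro ⟨s, hs, rfl⟩; exact ⟨s, by omega, rfl⟩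
  · rintro ⟨s, hs, rfl⟩; exact ⟨s, by omega, rfl⟩


lemma mod_ne_of_close {K r y : ℕ} (hne : r ≠ y) (h1 : y < r + K) (h2 : r < y + K) :
    y % K ≠ r % K := by
  intro h
  rcases Nat.lt_or_ge r y with hlt | hge
  · have hd := (Nat.modEq_iff_dvd' hlt.le).1 h.symm
    have := Nat.le_of_dvd (by omega) hd
    omega
  · have hlt : y < r := by omega
    have hd := (Nat.modEq_iff_dvd' hlt.le).1 h
    have := Nat.le_of_dvd (by omega) hd
    omega

lemma eq_add_of_mod_eq {K r r' : ℕ} (h : r % K = r' % K) (h1 : r < r') (h2 : r' < r + 2 * K) :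
    r' = r + K := by
  rcases Nat.eq_zero_or_pos K with hK | hK
  · subst hK; simp [Nat.mod_zero] at h; omega
  obtain ⟨c, hc⟩ := (Nat.modEq_iff_dvd' h1.le).1 h
  rcases c with _ | _ | c
  · omega
  · omega
  · have : 2 * K ≤ K * (c + 1 + 1) := by nlinarith
    omega

lemma dist_eq_of_len {u v : Fin m × Fin n}
    (p : (strongProd (pathGraph m) (pathGraph n)).Walk u v)
    (hlen : max (max (v.1.val - u.1.val) (u.1.val - v.1.val))
        (max (v.2.val - u.2.val) (u.2.val - v.2.val)) = p.length) :
    (strongProd (pathGraph m) (pathGraph n)).dist u v = p.length := by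
  refine le_antisymm (SimpleGraph.dist_le p) ?_
  obtain ⟨q, hq⟩ := p.reachable.exists_walk_length_eq_dist
  have := lip q
  omega


lemma key (hm : 2 ≤ m) {K : ℕ} (hK : 2 ≤ K) (hmK : m ≤ 2 * K) (t : ℕ)
    (u v : Fin m × Fin n) (hu : u.1.val % K = t) (hv : v.1.val % K = t) (huv : u ≠ v)
    (hlex : u.1.val < v.1.val ∨ (u.1.val = v.1.val ∧ u.2.val < v.2.val)) :
    ∃ p : (strongProd (pathGraph m) (pathGraph n)).Walk u v, p.IsPath ∧
      p.length = (strongProd (pathGraph m) (pathGraph n)).dist u v ∧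
      ∀ x ∈ p.support, x.1.val % K = t → x = u ∨ x = v := by
  obtain ⟨⟨r, hrm⟩, ⟨a, han⟩⟩ := u
  obtain ⟨⟨r', hrm'⟩, ⟨b, hbn⟩⟩ := v
  dsimp only at hu hv hlex ⊢
  rcases hlex with hlt | ⟨hreq, hclt⟩
  · -- rows differ by K
    have hrr : r' = r + K := eq_add_of_mod_eq (hu.trans hv.symm) hlt (by omega)
    set L : ℕ := K + (b - a - K) + (a - b - K) with hLdef
    set f : ℕ → Fin m × Fin n := fun s =>
      (⟨if s = L then r + K else if s + 1 ≤ K then r + s else r + K - 1,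
         by split_ifs <;> omega⟩,
       ⟨if a ≤ b then (if a + s ≤ b then a + s else b) else (if s ≤ a - b then a - s else b),
         by split_ifs <;> omega⟩) with hf
    have hadj : ∀ i, i < L →
        (strongProd (pathGraph m) (pathGraph n)).Adj (f i) (f (i + 1)) := by
      intro i hi
      rw [adj_iff]
      refine ⟨?_, ?_, ?_⟩
      · rw [ne_iff]
        simp only [hf]
        rcases Nat.lt_or_ge K L with hKL | hKL
        · right; split_ifs <;> omega
        · left; split_ifs <;> omega
      · simp only [hf]
        constructor <;> (split_ifs <;> omega)
      · simp only [hf]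
        constructor <;> (split_ifs <;> omega)
    have h0 : f 0 = (⟨⟨r, hrm⟩, ⟨a, han⟩⟩ : Fin m × Fin n) :=
      pair_ext
        (by show (if 0 = L then r + K else if 0 + 1 ≤ K then r + 0 else r + K - 1) = r
            split_ifs <;> omega)
        (by show (if a ≤ b then (if a + 0 ≤ b then a + 0 else b)
              else (if 0 ≤ a - b then a - 0 else b)) = a
            split_ifs <;> omega)
    have hL : f L = (⟨⟨r', hrm'⟩, ⟨b, hbn⟩⟩ : Fin m × Fin n) :=
      pair_ext
        (by show (if L = L then r + K else if L + 1 ≤ K then r + L else r + K - 1) = r'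
            split_ifs <;> omega)
        (by show (if a ≤ b then (if a + L ≤ b then a + L else b)
              else (if L ≤ a - b then a - L else b)) = b
            split_ifs <;> omega)
    have hlen : ((mkWalk _ f L hadj).copy h0 hL).length = L := by
      rw [Walk.length_copy, mkWalk_length]
    refine ⟨(mkWalk _ f L hadj).copy h0 hL, ?_, ?_, ?_⟩
    · rw [Walk.isPath_copy]
      apply mkWalk_isPath
      intro i j hi hj hij
      have e1 := congrArg (fun x => x.1.val) hij
      have e2 := congrArg (fun x => x.2.val) hij
      simp only [hf] at e1 e2
      split_ifs at e1 e2 <;> omega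
    · rw [hlen, dist_eq_of_len _ (by rw [hlen]; try dsimp only; omega), hlen]
    · intro x hx hxt
      rw [Walk.support_copy, mem_mkWalk_support] at hx
      obtain ⟨s, hs, rfl⟩ := hx
      rcases eq_or_ne s 0 with rfl | hs0
      · exact Or.inl h0
      rcases eq_or_ne s L with rfl | hsL
      · exact Or.inr hL
      exfalso
      have hrow : (f s).1.val = if s + 1 ≤ K then r + s else r + K - 1 := by
        simp only [hf]
        split_ifs <;> omega
      rw [hrow] at hxt
      exact mod_ne_of_close (by split_ifs <;> omega) (by split_ifs <;> omega)
        (by split_ifs <;> omega) (hxt.trans hu.symm)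
  · -- equal rows, a < b
    subst hreq
    set L : ℕ := b - a with hLdef
    set w : ℕ := if r = 0 then 1 else r - 1 with hwdef
    have hww : (w + 1 = r ∨ w = r + 1) ∧ w < m := by rw [hwdef]; split_ifs <;> omega
    set f : ℕ → Fin m × Fin n := fun s =>
      (⟨if s = 0 ∨ s = L then r else w, by split <;> omega⟩,
       ⟨if a + s ≤ b then a + s else b, by split <;> omega⟩) with hf
    have hadj : ∀ i, i < L →
        (strongProd (pathGraph m) (pathGraph n)).Adj (f i) (f (i + 1)) := by
      intro i hi
      rw [adj_iff]
      refine ⟨?_, ?_, ?_⟩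
      · rw [ne_iff]
        right
        simp only [hf]
        split_ifs <;> omega
      · simp only [hf]
        constructor <;> (split_ifs <;> omega)
      · simp only [hf]
        constructor <;> (split_ifs <;> omega)
    have h0 : f 0 = (⟨⟨r, hrm⟩, ⟨a, han⟩⟩ : Fin m × Fin n) :=
      pair_ext (by show (if (0:ℕ) = 0 ∨ (0:ℕ) = L then r else w) = r; split_ifs <;> omega)
        (by show (if a + 0 ≤ b then a + 0 else b) = a; split_ifs <;> omega)
    have hL : f L = (⟨⟨r, hrm'⟩, ⟨b, hbn⟩⟩ : Fin m × Fin n) :=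
      pair_ext (by show (if L = 0 ∨ L = L then r else w) = r; split_ifs <;> omega)
        (by show (if a + L ≤ b then a + L else b) = b; split_ifs <;> omega)
    have hlen : ((mkWalk _ f L hadj).copy h0 hL).length = L := by
      rw [Walk.length_copy, mkWalk_length]
    refine ⟨(mkWalk _ f L hadj).copy h0 hL, ?_, ?_, ?_⟩
    · rw [Walk.isPath_copy]
      apply mkWalk_isPath
      intro i j hi hj hij
      have e2 := congrArg (fun x => x.2.val) hij
      simp only [hf] at e2
      split_ifs at e2 <;> omega
    · rw [hlen, dist_eq_of_len _ (by rw [hlen]; try dsimp only; omega), hlen]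
    · intro x hx hxt
      rw [Walk.support_copy, mem_mkWalk_support] at hx
      obtain ⟨s, hs, rfl⟩ := hx
      rcases eq_or_ne s 0 with rfl | hs0
      · exact Or.inl h0
      rcases eq_or_ne s L with rfl | hsL
      · exact Or.inr hL
      exfalso
      have hrow : (f s).1.val = w := by
        simp only [hf]
        split_ifs with h
        · omega
        · rfl
      rw [hrow] at hxt
      exact mod_ne_of_close (by omega) (by omega) (by omega) (hxt.trans hu.symm)


lemma upper (hm : 2 ≤ m) {K : ℕ} (hK : 2 ≤ K) (hmK : m ≤ 2 * K) :
    ∃ c : Fin m × Fin n → Fin K,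
      ∀ i, IsMutualVisSet (strongProd (pathGraph m) (pathGraph n)) {v | c v = i} := by
  refine ⟨fun v => ⟨v.1.val % K, Nat.mod_lt _ (by omega)⟩, ?_⟩
  intro i u hu v hv huv
  have hu' : u.1.val % K = i.val := congrArg Fin.val hu
  have hv' : v.1.val % K = i.val := congrArg Fin.val hv
  rcases Nat.lt_trichotomy u.1.val v.1.val with h | h | h
  · obtain ⟨p, hp, hl, hav⟩ := key hm hK hmK i.val u v hu' hv' huv (Or.inl h)
    exact ⟨p, hp, hl, fun x hx hxS => hav x hx (congrArg Fin.val hxS)⟩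
  · rcases Nat.lt_trichotomy u.2.val v.2.val with h2 | h2 | h2
    · obtain ⟨p, hp, hl, hav⟩ := key hm hK hmK i.val u v hu' hv' huv (Or.inr ⟨h, h2⟩)
      exact ⟨p, hp, hl, fun x hx hxS => hav x hx (congrArg Fin.val hxS)⟩
    · exact absurd (pair_ext h h2) huv
    · obtain ⟨p, hp, hl, hav⟩ :=
        key hm hK hmK i.val v u hv' hu' (Ne.symm huv) (Or.inr ⟨h.symm, h2⟩)
      refine ⟨p.reverse, hp.reverse, ?_, ?_⟩
      · rw [Walk.length_reverse, hl, SimpleGraph.dist_comm]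
      · intro x hx hxS
        rw [Walk.support_reverse, List.mem_reverse] at hx
        exact (hav x hx (congrArg Fin.val hxS)).symm
  · obtain ⟨p, hp, hl, hav⟩ := key hm hK hmK i.val v u hv' hu' (Ne.symm huv) (Or.inl h)
    refine ⟨p.reverse, hp.reverse, ?_, ?_⟩
    · rw [Walk.length_reverse, hl, SimpleGraph.dist_comm]
    · intro x hx hxS
      rw [Walk.support_reverse, List.mem_reverse] at hx
      exact (hav x hx (congrArg Fin.val hxS)).symm

lemma diag_forced : ∀ {u v : Fin m × Fin n}
    (p : (strongProd (pathGraph m) (pathGraph n)).Walk u v),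
    v.1.val = u.1.val + p.length → v.2.val = u.2.val + p.length →
    ∀ d, d ≤ p.length → ∃ x ∈ p.support, x.1.val = u.1.val + d ∧ x.2.val = u.2.val + d := by
  intro u v p
  induction p with
  | nil =>
    intro h1 h2 d hd
    simp only [Walk.length_nil] at hd
    refine ⟨_, Walk.start_mem_support _, ?_, ?_⟩ <;> omega
  | @cons a x b h q ih =>
    intro h1 h2 d hd
    simp only [Walk.length_cons] at h1 h2 hd
    have lipq := lip q
    obtain ⟨-, hA, hB⟩ := adj_iff.1 h
    have hx1 : x.1.val = a.1.val + 1 := by omega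
    have hx2 : x.2.val = a.2.val + 1 := by omega
    rcases Nat.eq_zero_or_pos d with rfl | hd0
    · exact ⟨a, Walk.start_mem_support _, by omega, by omega⟩
    · obtain ⟨y, hy, hy1, hy2⟩ := ih (by omega) (by omega) (d - 1) (by omega)
      exact ⟨y, by rw [Walk.support_cons]; exact List.mem_cons_of_mem _ hy, by omega, by omega⟩

lemma dist_diag_le (hmn : m ≤ n) {i l : ℕ} (hil : i ≤ l) (hlm : l < m) :
    (strongProd (pathGraph m) (pathGraph n)).dist
      (⟨⟨i, by omega⟩, ⟨i, by omega⟩⟩ : Fin m × Fin n)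
      (⟨⟨l, by omega⟩, ⟨l, by omega⟩⟩ : Fin m × Fin n) ≤ l - i := by
  set f : ℕ → Fin m × Fin n := fun s =>
    (⟨if i + s ≤ l then i + s else l, by split <;> omega⟩,
     ⟨if i + s ≤ l then i + s else l, by split <;> omega⟩) with hf
  have hadj : ∀ s, s < l - i →
      (strongProd (pathGraph m) (pathGraph n)).Adj (f s) (f (s + 1)) := by
    intro s hs
    rw [adj_iff]
    refine ⟨?_, ?_, ?_⟩
    · rw [ne_iff]; left; simp only [hf]; split_ifs <;> omega
    · simp only [hf]; constructor <;> (split_ifs <;> omega)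
    · simp only [hf]; constructor <;> (split_ifs <;> omega)
  have h0 : f 0 = (⟨⟨i, by omega⟩, ⟨i, by omega⟩⟩ : Fin m × Fin n) :=
    pair_ext (by show (if i + 0 ≤ l then i + 0 else l) = i; split_ifs <;> omega)
      (by show (if i + 0 ≤ l then i + 0 else l) = i; split_ifs <;> omega)
  have hLe : f (l - i) = (⟨⟨l, by omega⟩, ⟨l, by omega⟩⟩ : Fin m × Fin n) :=
    pair_ext (by show (if i + (l - i) ≤ l then i + (l - i) else l) = l; split_ifs <;> omega)
      (by show (if i + (l - i) ≤ l then i + (l - i) else l) = l; split_ifs <;> omega)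
  have hdle := SimpleGraph.dist_le ((mkWalk _ f (l - i) hadj).copy h0 hLe)
  rwa [Walk.length_copy, mkWalk_length] at hdle

lemma no_three (hmn : m ≤ n) {k : ℕ} (c : Fin m × Fin n → Fin k)
    (hc : ∀ i, IsMutualVisSet (strongProd (pathGraph m) (pathGraph n)) {v | c v = i})
    {i j l : ℕ} (hij : i < j) (hjl : j < l) (hlm : l < m) (col : Fin k)
    (hi : c (⟨i, by omega⟩, ⟨i, by omega⟩) = col)
    (hj : c (⟨j, by omega⟩, ⟨j, by omega⟩) = col)
    (hl : c (⟨l, by omega⟩, ⟨l, by omega⟩) = col) : False := by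
  have hdle := dist_diag_le hmn (show i ≤ l by omega) hlm
  obtain ⟨p, hp, hlen, hav⟩ := hc col (⟨⟨i, by omega⟩, ⟨i, by omega⟩⟩ : Fin m × Fin n) hi
    (⟨⟨l, by omega⟩, ⟨l, by omega⟩⟩ : Fin m × Fin n) hl
    (by intro he; have := congrArg (fun x => x.1.val) he; dsimp at this; omega)
  have hgel := lip p
  dsimp only at hgel
  have hplen : p.length = l - i := by omega
  obtain ⟨x, hx, hx1, hx2⟩ := diag_forced p (by dsimp only; omega) (by dsimp only; omega)
    (j - i) (by omega)
  dsimp only at hx1 hx2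
  have hxv : x = (⟨⟨j, by omega⟩, ⟨j, by omega⟩⟩ : Fin m × Fin n) :=
    pair_ext (by dsimp only; omega) (by dsimp only; omega)
  rcases hav x hx (by rw [hxv]; exact hj) with he | he <;>
    · rw [hxv] at he
      have := congrArg (fun y => y.1.val) he
      dsimp at this
      omega

lemma lower (hm : 1 ≤ m) (hmn : m ≤ n) {k : ℕ} (c : Fin m × Fin n → Fin k)
    (hc : ∀ i, IsMutualVisSet (strongProd (pathGraph m) (pathGraph n)) {v | c v = i}) :
    m ≤ 2 * k := by
  classical
  set d : Fin m → Fin k := fun j => c (j, ⟨j.val, lt_of_lt_of_le j.isLt hmn⟩) with hd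
  have hfib : ∀ col : Fin k, ((Finset.univ : Finset (Fin m)).filter fun j => d j = col).card ≤ 2 := by
    intro col
    by_contra hgt
    push_neg at hgt
    rw [Finset.two_lt_card_iff] at hgt
    obtain ⟨a, b, e, ha, hb, he, hab, hae, hbe⟩ := hgt
    rw [Finset.mem_filter] at ha hb he
    have ha' := ha.2; have hb' := hb.2; have he' := he.2
    have H : ∀ (x y z : Fin m), x.val < y.val → y.val < z.val →
        d x = col → d y = col → d z = col → False := by
      intro x y z h1 h2 hx hy hz
      exact no_three hmn c hc h1 h2 z.isLt col hx hy hz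
    have hab' : a.val ≠ b.val := fun h => hab (Fin.ext h)
    have hae' : a.val ≠ e.val := fun h => hae (Fin.ext h)
    have hbe' : b.val ≠ e.val := fun h => hbe (Fin.ext h)
    rcases Nat.lt_trichotomy a.val b.val with h1 | h1 | h1 <;>
      rcases Nat.lt_trichotomy b.val e.val with h2 | h2 | h2 <;>
        rcases Nat.lt_trichotomy a.val e.val with h3 | h3 | h3 <;>
          first
            | exact H a b e h1 h2 ha' hb' he'
            | exact H a e b h3 (by omega) ha' he' hb'
            | exact H b a e (by omega) h3 hb' ha' he'
            | exact H b e a h2 (by omega) hb' he' ha'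
            | exact H e a b (by omega) h1 he' ha' hb'
            | exact H e b a (by omega) (by omega) he' hb' ha'
            | omega
  have hcard := Finset.card_eq_sum_card_fiberwise
    (f := d) (s := Finset.univ) (t := Finset.univ) (fun x _ => Finset.mem_univ _)
  rw [Finset.card_univ, Fintype.card_fin] at hcard
  have hsum : (∑ col : Fin k, ((Finset.univ : Finset (Fin m)).filter fun j => d j = col).card)
      ≤ ∑ _col : Fin k, 2 := Finset.sum_le_sum fun col _ => hfib col
  rw [Finset.sum_const, Finset.card_univ, Fintype.card_fin, smul_eq_mul] at hsum
  omega

lemma two_le_of (hm : 1 ≤ m) (hn : 3 ≤ n) {k : ℕ} (c : Fin m × Fin n → Fin k)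
    (hc : ∀ i, IsMutualVisSet (strongProd (pathGraph m) (pathGraph n)) {v | c v = i}) :
    2 ≤ k := by
  by_contra hlt
  push_neg at hlt
  interval_cases k
  · exact (c (⟨0, by omega⟩, ⟨0, by omega⟩)).elim0
  · obtain ⟨p, hp, hlen, hav⟩ := hc ⟨0, by omega⟩
      (⟨⟨0, by omega⟩, ⟨0, by omega⟩⟩ : Fin m × Fin n) (Subsingleton.elim _ _)
      (⟨⟨0, by omega⟩, ⟨2, by omega⟩⟩ : Fin m × Fin n) (Subsingleton.elim _ _)
      (by intro he; have := congrArg (fun x => x.2.val) he; dsimp at this; omega)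
    set f : ℕ → Fin m × Fin n := fun s =>
      (⟨0, by omega⟩, ⟨if s ≤ 2 then s else 2, by split <;> omega⟩) with hf
    have hadj : ∀ s, s < 2 →
        (strongProd (pathGraph m) (pathGraph n)).Adj (f s) (f (s + 1)) := by
      intro s hs
      rw [adj_iff]
      refine ⟨?_, ?_, ?_⟩
      · rw [ne_iff]; right; simp only [hf]; split_ifs <;> omega
      · simp only [hf]; constructor <;> omega
      · simp only [hf]; constructor <;> (split_ifs <;> omega)
    have h0 : f 0 = (⟨⟨0, by omega⟩, ⟨0, by omega⟩⟩ : Fin m × Fin n) :=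
      pair_ext rfl (by show (if 0 ≤ 2 then 0 else 2) = 0; split_ifs <;> omega)
    have hL2 : f 2 = (⟨⟨0, by omega⟩, ⟨2, by omega⟩⟩ : Fin m × Fin n) :=
      pair_ext rfl (by show (if 2 ≤ 2 then 2 else 2) = 2; split_ifs <;> omega)
    have hdle := SimpleGraph.dist_le ((mkWalk _ f 2 hadj).copy h0 hL2)
    rw [Walk.length_copy, mkWalk_length] at hdle
    have hgel := lip p
    dsimp only at hgel
    have hplen : p.length = 2 := by omega
    cases p with
    | @cons _ x _ h q =>
      have hxmem : x ∈ (Walk.cons h q).support := by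
        rw [Walk.support_cons]; exact List.mem_cons_of_mem _ q.start_mem_support
      rcases hav x hxmem (Subsingleton.elim _ _) with rfl | rfl
      · exact (strongProd (pathGraph m) (pathGraph n)).loopless.irrefl _ h
      · rw [Walk.length_cons] at hplen
        cases q with
        | nil => simp at hplen
        | @cons _ y _ h' q' =>
          rw [Walk.length_cons] at hplen
          have h0' := Walk.eq_of_length_eq_zero (p := q') (by omega)
          exact (strongProd (pathGraph m) (pathGraph n)).loopless.irrefl _ (h0' ▸ h')

end MuAux

/-- For `2 ≤ m ≤ n`, `χ_μ(P_m ⊠ P_n) = ⌈m/2⌉` when `m ≥ 3`, and `χ_μ(P₂ ⊠ P_n) = 2`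
when `n ≥ 3`. -/
theorem muChromatic_strongGrid (m n : ℕ) (hm : 2 ≤ m) (hmn : m ≤ n) :
    (3 ≤ m → muChromatic (strongProd (pathGraph m) (pathGraph n)) = (m + 1) / 2) ∧
      (m = 2 → 3 ≤ n → muChromatic (strongProd (pathGraph m) (pathGraph n)) = 2) := by
  constructor
  · intro h3
    have hset : (m + 1) / 2 ∈ {k | ∃ c : Fin m × Fin n → Fin k,
        ∀ i, IsMutualVisSet (strongProd (pathGraph m) (pathGraph n)) {v | c v = i}} :=
      MuAux.upper hm (by omega) (by omega)
    refine le_antisymm (Nat.sInf_le hset) (le_csInf ⟨_, hset⟩ ?_)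
    rintro k ⟨c, hc⟩
    have := MuAux.lower (by omega) hmn c hc
    omega
  · rintro rfl hn3
    have hset : 2 ∈ {k | ∃ c : Fin 2 × Fin n → Fin k,
        ∀ i, IsMutualVisSet (strongProd (pathGraph 2) (pathGraph n)) {v | c v = i}} :=
      MuAux.upper le_rfl le_rfl (by omega)
    refine le_antisymm (Nat.sInf_le hset) (le_csInf ⟨_, hset⟩ ?_)
    rintro k ⟨c, hc⟩
    exact MuAux.two_le_of (by omega) hn3 c hc
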